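/- Let k ≥ 2 be an integer, σ > 0, b ≥ 0, D_k > 0, and C_k' be reals. For each i = 1, …, k−1, let T_i > 0 and C_i > 0 be reals with T_i < D_k, set U_i = C_i/T_i, g_i = ⌈D_k/T_i⌉ − 1, and t_i = g_i·T_i, and assume t_1 ≤ t_2 ≤ ⋯ ≤ t_{k−1} ≤ t_k := D_k. Then for every j ∈ {1, …, k}: C_k' + Σ_{i=1}^{k−1} σ·(⌈t_j/T_i⌉·C_i + b·C_i) ≤ C_k' + Σ_{i=1}^{k−1} (σ·(g_i + b)/g_i)·t_i·U_i + Σ_{i=1}^{j−1} (σ/g_i)·t_i·U_i, and moreover Σ_{i=1}^{k−1} σ·(g_i·C_i + b·C_i) + Σ_{i=1}^{j−1} σ·C_i = Σ_{i=1}^{k−1} (σ·(g_i + b)/g_i)·t_i·U_i + Σ_{i=1}^{j−1} (σ/g_i)·t_i·U_i. -/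

import Mathlib

open Finset

theorem constant_inflation_workload_bound
    (k : ℕ) (hk : 2 ≤ k) (σ b Dk Ck' : ℝ)
    (hσ : 0 < σ) (hb : 0 ≤ b) (hDk : 0 < Dk)
    (T C : ℕ → ℝ)
    (hT : ∀ i ∈ Finset.Icc 1 (k - 1), 0 < T i)
    (hC : ∀ i ∈ Finset.Icc 1 (k - 1), 0 < C i)
    (hTD : ∀ i ∈ Finset.Icc 1 (k - 1), T i < Dk)
    (U : ℕ → ℝ) (hU : ∀ i ∈ Finset.Icc 1 (k - 1), U i = C i / T i)
    (g : ℕ → ℤ) (hg : ∀ i ∈ Finset.Icc 1 (k - 1), g i = ⌈Dk / T i⌉ - 1)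
    (t : ℕ → ℝ) (ht : ∀ i ∈ Finset.Icc 1 (k - 1), t i = (g i : ℝ) * T i)
    (htk : t k = Dk)
    (hmono : ∀ i ∈ Finset.Icc 1 k, ∀ j ∈ Finset.Icc 1 k, i ≤ j → t i ≤ t j) :
    ∀ j ∈ Finset.Icc 1 k,
      (Ck' + ∑ i ∈ Finset.Icc 1 (k - 1), σ * ((⌈t j / T i⌉ : ℝ) * C i + b * C i)
        ≤ Ck' + (∑ i ∈ Finset.Icc 1 (k - 1), (σ * ((g i : ℝ) + b) / (g i : ℝ)) * t i * U i)
            + (∑ i ∈ Finset.Icc 1 (j - 1), (σ / (g i : ℝ)) * t i * U i)) ∧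
      ((∑ i ∈ Finset.Icc 1 (k - 1), σ * ((g i : ℝ) * C i + b * C i))
          + (∑ i ∈ Finset.Icc 1 (j - 1), σ * C i)
        = (∑ i ∈ Finset.Icc 1 (k - 1), (σ * ((g i : ℝ) + b) / (g i : ℝ)) * t i * U i)
            + (∑ i ∈ Finset.Icc 1 (j - 1), (σ / (g i : ℝ)) * t i * U i)) := by
  intro j hj
  obtain ⟨hj1, hjk⟩ := Finset.mem_Icc.mp hj
  -- g i ≥ 1 for all relevant i
  have hg1 : ∀ i ∈ Finset.Icc 1 (k - 1), (1 : ℤ) ≤ g i := by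
    intro i hi
    have hTi := hT i hi
    have h1 : ((1 : ℤ) : ℝ) < Dk / T i := by
      push_cast
      exact (one_lt_div hTi).mpr (hTD i hi)
    have h2 := Int.lt_ceil.mpr h1
    rw [hg i hi]; omega
  have hgR : ∀ i ∈ Finset.Icc 1 (k - 1), (1 : ℝ) ≤ (g i : ℝ) := by
    intro i hi; exact_mod_cast hg1 i hi
  have hgne : ∀ i ∈ Finset.Icc 1 (k - 1), (g i : ℝ) ≠ 0 := by
    intro i hi; have := hgR i hi; linarith
  have htU : ∀ i ∈ Finset.Icc 1 (k - 1), t i * U i = (g i : ℝ) * C i := by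
    intro i hi
    have hTi := (hT i hi).ne'
    rw [ht i hi, hU i hi]
    field_simp
  have hsub : Finset.Icc 1 (j - 1) ⊆ Finset.Icc 1 (k - 1) := by
    apply Finset.Icc_subset_Icc_right; omega
  -- Equality part (termwise)
  have heq1 : ∀ i ∈ Finset.Icc 1 (k - 1),
      σ * ((g i : ℝ) * C i + b * C i) = (σ * ((g i : ℝ) + b) / (g i : ℝ)) * t i * U i := by
    intro i hi
    have h := htU i hi
    have hne := hgne i hi
    rw [mul_assoc, h]
    field_simp
  have heq2 : ∀ i ∈ Finset.Icc 1 (j - 1),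
      σ * C i = (σ / (g i : ℝ)) * t i * U i := by
    intro i hi
    have hi' := hsub hi
    have h := htU i hi'
    have hne := hgne i hi'
    rw [mul_assoc, h]
    field_simp
  have hEq : (∑ i ∈ Finset.Icc 1 (k - 1), σ * ((g i : ℝ) * C i + b * C i))
          + (∑ i ∈ Finset.Icc 1 (j - 1), σ * C i)
        = (∑ i ∈ Finset.Icc 1 (k - 1), (σ * ((g i : ℝ) + b) / (g i : ℝ)) * t i * U i)
            + (∑ i ∈ Finset.Icc 1 (j - 1), (σ / (g i : ℝ)) * t i * U i) := by
    rw [Finset.sum_congr rfl heq1, Finset.sum_congr rfl heq2]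
  refine ⟨?_, hEq⟩
  rw [add_assoc, ← hEq]
  -- Key inequality
  have hIcc : ∀ m : ℕ, Finset.Icc 1 m = Finset.Ioc 0 m := by
    intro m; ext x; simp [Nat.lt_iff_add_one_le]
  have htjDk : t j ≤ Dk := by
    rw [← htk]
    exact hmono j hj k (by simp [Finset.mem_Icc]; omega) hjk
  -- termwise bounds
  have hA : ∀ i ∈ Finset.Ioc 0 (j - 1),
      σ * ((⌈t j / T i⌉ : ℝ) * C i + b * C i) ≤ σ * ((g i : ℝ) * C i + b * C i) + σ * C i := by
    intro i hi
    obtain ⟨hi0, hi1⟩ := Finset.mem_Ioc.mp hi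
    have hi' : i ∈ Finset.Icc 1 (k - 1) := Finset.mem_Icc.mpr ⟨hi0, by omega⟩
    have hTi := hT i hi'
    have hCi := hC i hi'
    have hle : ⌈t j / T i⌉ ≤ g i + 1 := by
      rw [hg i hi']
      have : ⌈t j / T i⌉ ≤ ⌈Dk / T i⌉ :=
        Int.ceil_le_ceil (by gcongr)
      omega
    have hleR : ((⌈t j / T i⌉ : ℤ) : ℝ) ≤ (g i : ℝ) + 1 := by exact_mod_cast hle
    nlinarith [mul_pos hσ hCi]
  have hB : ∀ i ∈ Finset.Ioc (j - 1) (k - 1),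
      σ * ((⌈t j / T i⌉ : ℝ) * C i + b * C i) ≤ σ * ((g i : ℝ) * C i + b * C i) := by
    intro i hi
    obtain ⟨hi0, hi1⟩ := Finset.mem_Ioc.mp hi
    have hi' : i ∈ Finset.Icc 1 (k - 1) := Finset.mem_Icc.mpr ⟨by omega, hi1⟩
    have hTi := hT i hi'
    have hCi := hC i hi'
    have htji : t j ≤ t i :=
      hmono j hj i (by simp [Finset.mem_Icc]; omega) (by omega)
    have hle : ⌈t j / T i⌉ ≤ g i := by
      rw [Int.ceil_le]
      rw [div_le_iff₀ hTi, ← ht i hi']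
      exact htji
    have hleR : ((⌈t j / T i⌉ : ℤ) : ℝ) ≤ (g i : ℝ) := by exact_mod_cast hle
    nlinarith [mul_pos hσ hCi]
  have hsplit : ∀ f : ℕ → ℝ, ∑ i ∈ Finset.Icc 1 (k - 1), f i
      = (∑ i ∈ Finset.Ioc 0 (j - 1), f i) + ∑ i ∈ Finset.Ioc (j - 1) (k - 1), f i := by
    intro f
    rw [hIcc]
    exact (Finset.sum_Ioc_consecutive f (by omega) (by omega)).symm
  rw [hsplit fun i => σ * ((⌈t j / T i⌉ : ℝ) * C i + b * C i),
      hsplit fun i => σ * ((g i : ℝ) * C i + b * C i), hIcc (j - 1)]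
  have h1 := Finset.sum_le_sum hA
  have h2 := Finset.sum_le_sum hB
  rw [Finset.sum_add_distrib] at h1
  linarith
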